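/- Let D be a squarefree integer and let N > 1 be an odd, squarefree, composite integer with gcd(N, D) = 1. Define 𝓕_D(n) = n − (D/n), where (D/n) is the Jacobi symbol. Then the following are equivalent: (1) for every z ∈ ℤ[√D] with N(z) ≡ 1 (mod N), one has z^{𝓕_D(N)} ≡ 1 (mod N) (i.e., N is a 𝒢(D)-Carmichael number); (2) for every prime q dividing N, 𝓕_D(q) divides 𝓕_D(N). -/

import Mathlib

open Polynomial

section Helpers

private lemma natCast_dvd_zsqrtd {D : ℤ} (n : ℕ) (w : Zsqrtd D) :
    (n : Zsqrtd D) ∣ w ↔ (n : ℤ) ∣ w.re ∧ (n : ℤ) ∣ w.im := by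
  have h : ((n : ℤ) : Zsqrtd D) = (n : Zsqrtd D) := by push_cast; rfl
  rw [← h, Zsqrtd.intCast_dvd]

private lemma int_dvd_iff_natAbs (n : ℕ) (m : ℤ) : (n : ℤ) ∣ m ↔ n ∣ m.natAbs := by
  rw [← Int.natCast_dvd_natCast, Int.dvd_natAbs]

private lemma squarefree_nat_dvd_int {N : ℕ} (hsf : Squarefree N) (m : ℤ)
    (h : ∀ p : ℕ, p.Prime → p ∣ N → (p : ℤ) ∣ m) : (N : ℤ) ∣ m := by
  rw [int_dvd_iff_natAbs, ← Nat.prod_primeFactors_of_squarefree hsf]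
  refine Finset.prod_primes_dvd _ (fun p hp => (Nat.prime_of_mem_primeFactors hp).prime)
    (fun p hp => ?_)
  rw [← int_dvd_iff_natAbs]
  exact h p (Nat.prime_of_mem_primeFactors hp) (Nat.dvd_of_mem_primeFactors hp)

private lemma pow_sub_one_dvd_pow_sub_one {R : Type*} [CommRing R] (z : R) {m n : ℕ}
    (h : m ∣ n) : z ^ m - 1 ∣ z ^ n - 1 := by
  obtain ⟨c, rfl⟩ := h
  have := sub_dvd_pow_sub_pow (z ^ m) 1 c
  rwa [one_pow, ← pow_mul] at this

private lemma jacobi_bounds (a : ℤ) (b : ℕ) : -1 ≤ jacobiSym a b ∧ jacobiSym a b ≤ 1 := by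
  rcases jacobiSym.trichotomy a b with h | h | h <;> rw [h] <;> constructor <;> norm_num

private lemma int_crt (q M : ℕ) (hco : Nat.Coprime q M) (r1 r2 : ℤ) :
    ∃ x : ℤ, (q : ℤ) ∣ x - r1 ∧ (M : ℤ) ∣ x - r2 := by
  obtain ⟨u, v, huv⟩ := (Nat.isCoprime_iff_coprime.mpr hco)
  exact ⟨r2 * (u * q) + r1 * (v * M), ⟨u * (r2 - r1), by linear_combination r1 * huv⟩,
    ⟨v * (r1 - r2), by linear_combination r2 * huv⟩⟩

private lemma hom_of_dvd {D : ℤ} {R : Type*} [CommRing R] (φ : Zsqrtd D →+* R) (q : ℕ)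
    (hq : ((q : ℕ) : R) = 0) {w : Zsqrtd D} (h : (q : Zsqrtd D) ∣ w) : φ w = 0 := by
  obtain ⟨c, rfl⟩ := h
  rw [map_mul, map_natCast, hq, zero_mul]

private lemma two_ne_zero_zmod (q : ℕ) [hqp : Fact q.Prime] (hq2 : q ≠ 2) :
    (2 : ZMod q) ≠ 0 := by
  intro h
  have h2 : ((2 : ℕ) : ZMod q) = 0 := by exact_mod_cast h
  rw [ZMod.natCast_eq_zero_iff] at h2
  have := (Nat.prime_dvd_prime_iff_eq hqp.out Nat.prime_two).mp h2
  exact hq2 this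

private lemma zmod_val_int_cast {q : ℕ} [NeZero q] (c : ZMod q) :
    (((c.val : ℤ)) : ZMod q) = c := by
  push_cast
  simp [ZMod.natCast_val, ZMod.cast_id]

end Helpers

section CaseOne

variable {q : ℕ} [hqp : Fact q.Prime] {D : ℤ} {s : ZMod q}

private lemma case1_lift_apply (hs : s * s = ((D : ℤ) : ZMod q)) (z : Zsqrtd D) :
    Zsqrtd.lift ⟨s, hs⟩ z = (z.re : ZMod q) + (z.im : ZMod q) * s := by
  simp [Zsqrtd.lift]

private lemma case1_norm_eq (hs : s * s = ((D : ℤ) : ZMod q))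
    (hs' : -s * -s = ((D : ℤ) : ZMod q)) (z : Zsqrtd D) :
    Zsqrtd.lift ⟨s, hs⟩ z * Zsqrtd.lift ⟨-s, hs'⟩ z = ((z.norm : ℤ) : ZMod q) := by
  rw [case1_lift_apply, case1_lift_apply, Zsqrtd.norm_def]
  push_cast
  linear_combination (-(z.im : ZMod q) * (z.im : ZMod q)) * hs

private lemma case1_ker (hq2 : q ≠ 2) (hs : s * s = ((D : ℤ) : ZMod q)) (hs0 : s ≠ 0)
    (hs' : -s * -s = ((D : ℤ) : ZMod q)) (w : Zsqrtd D)
    (h1 : Zsqrtd.lift ⟨s, hs⟩ w = 0) (h2 : Zsqrtd.lift ⟨-s, hs'⟩ w = 0) :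
    (q : Zsqrtd D) ∣ w := by
  rw [case1_lift_apply] at h1 h2
  have h2ne := two_ne_zero_zmod q hq2
  have hre : (w.re : ZMod q) = 0 := by
    have h : (2 : ZMod q) * (w.re : ZMod q) = 0 := by linear_combination h1 + h2
    rcases mul_eq_zero.mp h with h | h
    · exact absurd h h2ne
    · exact h
  have him : (w.im : ZMod q) = 0 := by
    have h : (2 : ZMod q) * s * (w.im : ZMod q) = 0 := by linear_combination h1 - h2
    rcases mul_eq_zero.mp h with h | h
    · rcases mul_eq_zero.mp h with h | h
      · exact absurd h h2ne
      · exact absurd h hs0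
    · exact h
  rw [natCast_dvd_zsqrtd]
  constructor <;> rwa [← ZMod.intCast_zmod_eq_zero_iff_dvd]

private lemma case1_pow (hq2 : q ≠ 2) (hs : s * s = ((D : ℤ) : ZMod q)) (hs0 : s ≠ 0)
    (z : Zsqrtd D) (hz : (q : ℤ) ∣ z.norm - 1) :
    (q : Zsqrtd D) ∣ z ^ (q - 1) - 1 := by
  have hs' : -s * -s = ((D : ℤ) : ZMod q) := by rw [neg_mul_neg]; exact hs
  have hnorm1 : ((z.norm : ℤ) : ZMod q) = 1 := by
    have h0 : ((z.norm - 1 : ℤ) : ZMod q) = 0 := (ZMod.intCast_zmod_eq_zero_iff_dvd _ q).mpr hz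
    push_cast at h0
    linear_combination h0
  have hfg : Zsqrtd.lift ⟨s, hs⟩ z * Zsqrtd.lift ⟨-s, hs'⟩ z = 1 := by
    rw [case1_norm_eq hs hs' z, hnorm1]
  have hf0 : Zsqrtd.lift ⟨s, hs⟩ z ≠ 0 := left_ne_zero_of_mul_eq_one hfg
  have hg0 : Zsqrtd.lift ⟨-s, hs'⟩ z ≠ 0 := right_ne_zero_of_mul_eq_one hfg
  have hfe : Zsqrtd.lift ⟨s, hs⟩ (z ^ (q - 1) - 1) = 0 := by
    rw [map_sub, map_pow, map_one, ZMod.pow_card_sub_one_eq_one hf0, sub_self]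
  have hge : Zsqrtd.lift ⟨-s, hs'⟩ (z ^ (q - 1) - 1) = 0 := by
    rw [map_sub, map_pow, map_one, ZMod.pow_card_sub_one_eq_one hg0, sub_self]
  exact case1_ker hq2 hs hs0 hs' _ hfe hge

private lemma case1_exists (hq2 : q ≠ 2) (hs : s * s = ((D : ℤ) : ZMod q)) (hs0 : s ≠ 0) :
    ∃ z : Zsqrtd D, (q : ℤ) ∣ z.norm - 1 ∧
      ∀ k : ℕ, (q : Zsqrtd D) ∣ z ^ k - 1 → (q - 1) ∣ k := by
  have hs' : -s * -s = ((D : ℤ) : ZMod q) := by rw [neg_mul_neg]; exact hs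
  obtain ⟨g0, hg0⟩ := IsCyclic.exists_generator (α := (ZMod q)ˣ)
  have horder : orderOf g0 = q - 1 := by
    rw [orderOf_eq_card_of_forall_mem_zpowers hg0, Nat.card_eq_fintype_card, ZMod.card_units_eq_totient,
      Nat.totient_prime hqp.out]
  set u : ZMod q := (g0 : ZMod q) with hu
  have hu0 : u ≠ 0 := g0.ne_zero
  have h2ne := two_ne_zero_zmod q hq2
  set a : ZMod q := (u + u⁻¹) * (2 : ZMod q)⁻¹ with ha
  set b : ZMod q := (u - u⁻¹) * (2 * s)⁻¹ with hb
  set z : Zsqrtd D := ⟨(a.val : ℤ), (b.val : ℤ)⟩ with hzdef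
  have hre : ((z.re : ℤ) : ZMod q) = a := zmod_val_int_cast a
  have him : ((z.im : ℤ) : ZMod q) = b := zmod_val_int_cast b
  have hfz : Zsqrtd.lift ⟨s, hs⟩ z = u := by
    rw [case1_lift_apply, hre, him, ha, hb]
    field_simp
    ring
  have hgz : Zsqrtd.lift ⟨-s, hs'⟩ z = u⁻¹ := by
    rw [case1_lift_apply, hre, him, ha, hb]
    field_simp
    ring
  have hnorm : ((z.norm : ℤ) : ZMod q) = 1 := by
    rw [← case1_norm_eq hs hs' z, hfz, hgz, mul_inv_cancel₀ hu0]
  refine ⟨z, ?_, ?_⟩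
  · rw [← ZMod.intCast_zmod_eq_zero_iff_dvd]
    push_cast
    linear_combination hnorm
  · intro k hk
    have h0 : Zsqrtd.lift ⟨s, hs⟩ (z ^ k - 1) = 0 :=
      hom_of_dvd _ q (by simp) hk
    rw [map_sub, map_pow, map_one, hfz, sub_eq_zero] at h0
    have hgk : g0 ^ k = 1 := by
      ext
      rw [Units.val_pow_eq_pow_val]
      exact h0.trans rfl
    rw [← horder]
    exact orderOf_dvd_of_pow_eq_one hgk

end CaseOne

section CaseTwo

variable {q : ℕ} [hqp : Fact q.Prime] {D : ℤ}

private lemma case2_root_sq {d : ZMod q} :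
    (AdjoinRoot.root (X ^ 2 - C d)) ^ 2 = AdjoinRoot.of _ d := by
  have h0 := AdjoinRoot.eval₂_root (X ^ 2 - C d)
  simp only [eval₂_sub, eval₂_pow, eval₂_X, eval₂_C] at h0
  exact sub_eq_zero.mp h0

private lemma case2_d_pow (hq2 : q ≠ 2) {d : ZMod q} (hd0 : d ≠ 0) (hnd : ¬ IsSquare d) :
    d ^ (q / 2) = -1 := by
  have hodd : q % 2 = 1 := Nat.odd_iff.mp (hqp.out.odd_of_ne_two hq2)
  have hq1 : 1 ≤ q := hqp.out.one_lt.le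
  have h1 : d ^ (q - 1) = 1 := ZMod.pow_card_sub_one_eq_one hd0
  have hqq : q / 2 + q / 2 = q - 1 := by omega
  have h2 : d ^ (q / 2) * d ^ (q / 2) = 1 := by rw [← pow_add, hqq]; exact h1
  rcases mul_self_eq_one_iff.mp h2 with h | h
  · exact absurd ((ZMod.euler_criterion q hd0).mpr h) hnd
  · exact h

private lemma case2_irr {d : ZMod q} (hnd : ¬ IsSquare d) : Irreducible (X ^ 2 - C d) := by
  rw [X_pow_sub_C_irreducible_iff_of_prime Nat.prime_two]
  intro b hb
  exact hnd ⟨b, by rw [← hb]; ring⟩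

private lemma case2_rep {d : ZMod q} : ∀ x : AdjoinRoot (X ^ 2 - C d),
    ∃ a b : ZMod q,
      x = AdjoinRoot.of _ a + AdjoinRoot.of _ b * AdjoinRoot.root (X ^ 2 - C d) := by
  set f : (ZMod q)[X] := X ^ 2 - C d with hf
  have hmon : f.Monic := monic_X_pow_sub_C d (by norm_num)
  intro x
  obtain ⟨p, rfl⟩ := AdjoinRoot.mk_surjective x
  set p' := p %ₘ f with hp'
  have h1 : AdjoinRoot.mk f p = AdjoinRoot.mk f p' := by
    rw [AdjoinRoot.mk_eq_mk, hp', modByMonic_eq_sub_mul_div _ f]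
    have h : p - (p - f * (p /ₘ f)) = f * (p /ₘ f) := by ring
    rw [h]
    exact Dvd.intro _ rfl
  have hdeg : p'.degree < 2 := by
    have h := degree_modByMonic_lt p hmon
    rwa [hf, degree_X_pow_sub_C (by norm_num) d] at h
  have hdeg1 : p'.degree ≤ 1 := by
    rcases hn : p'.degree with _ | n
    · exact bot_le
    · rw [hn] at hdeg
      rw [show (some n : WithBot ℕ) = ((n : ℕ) : WithBot ℕ) from rfl] at hdeg ⊢
      have hn2 : n < 2 := by exact_mod_cast hdeg
      exact_mod_cast Nat.lt_succ_iff.mp hn2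
  refine ⟨p'.coeff 0, p'.coeff 1, ?_⟩
  rw [h1]
  conv_lhs => rw [eq_X_add_C_of_degree_le_one hdeg1]
  rw [map_add, map_mul, AdjoinRoot.mk_C, AdjoinRoot.mk_C, AdjoinRoot.mk_X]
  ring

private lemma case2_inj {d : ZMod q} (hirr : Irreducible (X ^ 2 - C d)) :
    Function.Injective (AdjoinRoot.of (X ^ 2 - C d)) := by
  haveI := Fact.mk hirr
  exact (AdjoinRoot.of (X ^ 2 - C d)).injective

private lemma case2_sigma (hq2 : q ≠ 2) {d : ZMod q} (hd0 : d ≠ 0) (hnd : ¬ IsSquare d)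
    (a b : ZMod q) :
    (AdjoinRoot.of (X ^ 2 - C d) a +
        AdjoinRoot.of (X ^ 2 - C d) b * AdjoinRoot.root (X ^ 2 - C d)) ^ q =
      AdjoinRoot.of (X ^ 2 - C d) a -
        AdjoinRoot.of (X ^ 2 - C d) b * AdjoinRoot.root (X ^ 2 - C d) := by
  have hirr := case2_irr hnd
  haveI := Fact.mk hirr
  set f : (ZMod q)[X] := X ^ 2 - C d with hf
  set S := AdjoinRoot f with hS
  set r := AdjoinRoot.root f with hr
  set og : ZMod q →+* S := AdjoinRoot.of f with hog
  haveI : CharP S q := charP_of_injective_ringHom (case2_inj hirr) q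
  have hodd : q % 2 = 1 := Nat.odd_iff.mp (hqp.out.odd_of_ne_two hq2)
  have hrq : r ^ q = -r := by
    have he : r ^ q = r ^ (2 * (q / 2) + 1) := by congr 1; omega
    rw [he, pow_succ, pow_mul, case2_root_sq, ← map_pow, case2_d_pow hq2 hd0 hnd]
    rw [map_neg, map_one]
    ring
  have hadd : (og a + og b * r) ^ q = (og a) ^ q + (og b * r) ^ q := add_pow_char _ _ q
  rw [hadd, ← map_pow, ZMod.pow_card, mul_pow, ← map_pow, ZMod.pow_card, hrq]
  ring

private lemma case2_norm_formula {d : ZMod q} (a b : ZMod q) :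
    (AdjoinRoot.of (X ^ 2 - C d) a +
        AdjoinRoot.of (X ^ 2 - C d) b * AdjoinRoot.root (X ^ 2 - C d)) *
      (AdjoinRoot.of (X ^ 2 - C d) a -
        AdjoinRoot.of (X ^ 2 - C d) b * AdjoinRoot.root (X ^ 2 - C d)) =
      AdjoinRoot.of (X ^ 2 - C d) (a * a - d * (b * b)) := by
  have h := case2_root_sq (q := q) (d := d)
  rw [map_sub, map_mul, map_mul, map_mul, ← h]
  ring

end CaseTwo

section CaseTwoMain

variable {q : ℕ} [hqp : Fact q.Prime] {D : ℤ}

private lemma case2_phi_root :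
    AdjoinRoot.root (X ^ 2 - C ((D : ZMod q))) * AdjoinRoot.root (X ^ 2 - C ((D : ZMod q))) =
      ((D : ℤ) : AdjoinRoot (X ^ 2 - C ((D : ZMod q)))) := by
  rw [← pow_two, case2_root_sq]
  exact map_intCast _ D

private lemma case2_phi_apply (z : Zsqrtd D) :
    Zsqrtd.lift ⟨AdjoinRoot.root (X ^ 2 - C ((D : ZMod q))), case2_phi_root⟩ z =
      AdjoinRoot.of _ ((z.re : ZMod q)) +
        AdjoinRoot.of _ ((z.im : ZMod q)) * AdjoinRoot.root (X ^ 2 - C ((D : ZMod q))) := by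
  simp [Zsqrtd.lift, map_intCast]

private lemma case2_norm_cast (z : Zsqrtd D) :
    ((z.norm : ZMod q)) =
      (z.re : ZMod q) * (z.re : ZMod q) - (D : ZMod q) * ((z.im : ZMod q) * (z.im : ZMod q)) := by
  rw [Zsqrtd.norm_def]
  push_cast
  ring

private lemma case2_phi_pow (hq2 : q ≠ 2) (hd0 : ((D : ZMod q)) ≠ 0)
    (hnd : ¬ IsSquare ((D : ZMod q))) (z : Zsqrtd D) :
    Zsqrtd.lift ⟨AdjoinRoot.root (X ^ 2 - C ((D : ZMod q))), case2_phi_root⟩ z ^ (q + 1) =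
      AdjoinRoot.of _ ((z.norm : ZMod q)) := by
  rw [pow_succ (Zsqrtd.lift ⟨AdjoinRoot.root (X ^ 2 - C ((D : ZMod q))), case2_phi_root⟩ z) q,
    case2_phi_apply]
  rw [case2_sigma hq2 hd0 hnd]
  rw [mul_comm, case2_norm_formula, case2_norm_cast]

private lemma case2_ker (hnd : ¬ IsSquare ((D : ZMod q))) (w : Zsqrtd D)
    (h : Zsqrtd.lift ⟨AdjoinRoot.root (X ^ 2 - C ((D : ZMod q))), case2_phi_root⟩ w = 0) :
    (q : Zsqrtd D) ∣ w := by
  have hirr := case2_irr hnd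
  rw [case2_phi_apply] at h
  set og := AdjoinRoot.of (X ^ 2 - C ((D : ZMod q))) with hog
  set r := AdjoinRoot.root (X ^ 2 - C ((D : ZMod q))) with hr
  set A : ZMod q := ((w.re : ZMod q)) with hA
  set B : ZMod q := ((w.im : ZMod q)) with hB
  have hAB : A = 0 ∧ B = 0 := by
    by_cases hBz : B = 0
    · refine ⟨?_, hBz⟩
      rw [hBz, map_zero, zero_mul, add_zero] at h
      exact case2_inj hirr (h.trans (map_zero og).symm)
    · exfalso
      have h1 : og B * r = - og A := by linear_combination h
      have hBinv : og B⁻¹ * og B = 1 := by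
        rw [← map_mul, inv_mul_cancel₀ hBz, map_one]
      have h2 : r = og (-(B⁻¹ * A)) := by
        calc r = (og B⁻¹ * og B) * r := by rw [hBinv, one_mul]
        _ = og B⁻¹ * (og B * r) := by ring
        _ = og B⁻¹ * (- og A) := by rw [h1]
        _ = og (-(B⁻¹ * A)) := by rw [map_neg, map_mul]; ring
      have h3 : og ((D : ZMod q)) = og ((B⁻¹ * A) * (B⁻¹ * A)) := by
        have hroot2 : r ^ 2 = r * r := sq r
        rw [← case2_root_sq, hroot2, h2, ← map_mul]
        exact congrArg og (by ring)
      exact hnd ⟨B⁻¹ * A, case2_inj hirr h3⟩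
  rw [natCast_dvd_zsqrtd]
  exact ⟨(ZMod.intCast_zmod_eq_zero_iff_dvd _ q).mp hAB.1,
    (ZMod.intCast_zmod_eq_zero_iff_dvd _ q).mp hAB.2⟩

private lemma case2_pow (hq2 : q ≠ 2) (hd0 : ((D : ZMod q)) ≠ 0)
    (hnd : ¬ IsSquare ((D : ZMod q))) (z : Zsqrtd D) (hz : (q : ℤ) ∣ z.norm - 1) :
    (q : Zsqrtd D) ∣ z ^ (q + 1) - 1 := by
  have hnorm1 : ((z.norm : ZMod q)) = 1 := by
    have h0 : ((z.norm - 1 : ℤ) : ZMod q) = 0 := (ZMod.intCast_zmod_eq_zero_iff_dvd _ q).mpr hz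
    push_cast at h0
    linear_combination h0
  refine case2_ker hnd _ ?_
  rw [map_sub, map_pow, map_one, case2_phi_pow hq2 hd0 hnd, hnorm1, map_one, sub_self]

private lemma case2_exists (hq2 : q ≠ 2) (hd0 : ((D : ZMod q)) ≠ 0)
    (hnd : ¬ IsSquare ((D : ZMod q))) :
    ∃ z : Zsqrtd D, (q : ℤ) ∣ z.norm - 1 ∧
      ∀ k : ℕ, (q : Zsqrtd D) ∣ z ^ k - 1 → (q + 1) ∣ k := by
  have hirr := case2_irr hnd
  haveI := Fact.mk hirr
  set f : (ZMod q)[X] := X ^ 2 - C ((D : ZMod q)) with hf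
  set S := AdjoinRoot f with hS
  have hmon : f.Monic := monic_X_pow_sub_C _ (by norm_num)
  have hf0 : f ≠ 0 := hmon.ne_zero
  let pb := AdjoinRoot.powerBasis hf0
  haveI : Module.Finite (ZMod q) S := pb.finite
  haveI : Fintype S := @Fintype.ofFinite S (Module.finite_of_finite (ZMod q))
  have hdim : pb.dim = 2 := by
    rw [AdjoinRoot.powerBasis_dim, hf, natDegree_X_pow_sub_C]
  have hcardS : Fintype.card S = q ^ 2 := by
    rw [Module.card_eq_pow_finrank (K := ZMod q) (V := S), ZMod.card]
    congr 1
    rw [pb.finrank, hdim]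
  have hq3 : 3 ≤ q := by
    have := hqp.out.two_le
    omega
  obtain ⟨γ, hγ⟩ := IsCyclic.exists_generator (α := Sˣ)
  have horder : orderOf γ = q ^ 2 - 1 := by
    rw [orderOf_eq_card_of_forall_mem_zpowers hγ, Nat.card_eq_fintype_card,
      Fintype.card_units, hcardS]
  have hfact : (q - 1) * (q + 1) = q ^ 2 - 1 := by
    rw [sq, Nat.sub_one_mul, Nat.mul_add, mul_one]
    omega
  set x : Sˣ := γ ^ (q - 1) with hx
  have horderx : orderOf x = q + 1 := by
    rw [hx, orderOf_pow, horder, ← hfact, Nat.gcd_eq_right ⟨q + 1, rfl⟩,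
      Nat.mul_div_cancel_left _ (by omega : 0 < q - 1)]
  obtain ⟨a, b, hab⟩ := case2_rep ((x : S))
  set z : Zsqrtd D := ⟨(a.val : ℤ), (b.val : ℤ)⟩ with hzdef
  have hre : ((z.re : ZMod q)) = a := zmod_val_int_cast a
  have him : ((z.im : ZMod q)) = b := zmod_val_int_cast b
  have hφz : Zsqrtd.lift ⟨AdjoinRoot.root f, case2_phi_root⟩ z = (x : S) := by
    rw [case2_phi_apply, hre, him, hab]
  have hxpow : x ^ (q + 1) = 1 := by
    rw [← horderx]
    exact pow_orderOf_eq_one x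
  have hnorm : ((z.norm : ZMod q)) = 1 := by
    apply case2_inj hirr
    rw [← case2_phi_pow hq2 hd0 hnd, hφz, map_one]
    rw [← Units.val_pow_eq_pow_val, hxpow, Units.val_one]
  refine ⟨z, ?_, ?_⟩
  · rw [← ZMod.intCast_zmod_eq_zero_iff_dvd]
    push_cast
    linear_combination hnorm
  · intro k hk
    have h0 : Zsqrtd.lift ⟨AdjoinRoot.root f, case2_phi_root⟩ (z ^ k - 1) = 0 := by
      refine hom_of_dvd _ q ?_ hk
      haveI : CharP S q := charP_of_injective_ringHom (case2_inj hirr) q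
      exact CharP.cast_eq_zero S q
    rw [map_sub, map_pow, map_one, hφz, sub_eq_zero] at h0
    have hxk : x ^ k = 1 := by
      ext
      rw [Units.val_pow_eq_pow_val]
      exact h0.trans rfl
    rw [← horderx]
    exact orderOf_dvd_of_pow_eq_one hxk

end CaseTwoMain

section KeyLemmas

private lemma keyA (D : ℤ) (q : ℕ) (hq : q.Prime) (hq2 : q ≠ 2) (hqD : ¬ (q : ℤ) ∣ D)
    (z : Zsqrtd D) (hz : (q : ℤ) ∣ z.norm - 1) :
    (q : Zsqrtd D) ∣ z ^ ((q : ℤ) - jacobiSym D q).toNat - 1 := by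
  haveI := Fact.mk hq
  have hd0 : ((D : ZMod q)) ≠ 0 := by
    rw [Ne, ZMod.intCast_zmod_eq_zero_iff_dvd]; exact hqD
  by_cases hsq : IsSquare ((D : ZMod q))
  · have hj : jacobiSym D q = 1 := by
      rw [← jacobiSym.legendreSym.to_jacobiSym]
      exact (legendreSym.eq_one_iff q hd0).mpr hsq
    have hexp : ((q : ℤ) - jacobiSym D q).toNat = q - 1 := by rw [hj]; omega
    rw [hexp]
    obtain ⟨s, hs⟩ := hsq
    have hs0 : s ≠ 0 := by rintro rfl; exact hd0 (by rw [hs, mul_zero])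
    exact case1_pow hq2 hs.symm hs0 z hz
  · have hj : jacobiSym D q = -1 := by
      rw [← jacobiSym.legendreSym.to_jacobiSym]
      exact (legendreSym.eq_neg_one_iff q).mpr hsq
    have hexp : ((q : ℤ) - jacobiSym D q).toNat = q + 1 := by rw [hj]; omega
    rw [hexp]
    exact case2_pow hq2 hd0 hsq z hz

private lemma keyB (D : ℤ) (q : ℕ) (hq : q.Prime) (hq2 : q ≠ 2) (hqD : ¬ (q : ℤ) ∣ D) :
    ∃ z : Zsqrtd D, (q : ℤ) ∣ z.norm - 1 ∧
      ∀ k : ℕ, (q : Zsqrtd D) ∣ z ^ k - 1 → ((q : ℤ) - jacobiSym D q).toNat ∣ k := by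
  haveI := Fact.mk hq
  have hd0 : ((D : ZMod q)) ≠ 0 := by
    rw [Ne, ZMod.intCast_zmod_eq_zero_iff_dvd]; exact hqD
  by_cases hsq : IsSquare ((D : ZMod q))
  · have hj : jacobiSym D q = 1 := by
      rw [← jacobiSym.legendreSym.to_jacobiSym]
      exact (legendreSym.eq_one_iff q hd0).mpr hsq
    have hexp : ((q : ℤ) - jacobiSym D q).toNat = q - 1 := by rw [hj]; omega
    rw [hexp]
    obtain ⟨s, hs⟩ := hsq
    have hs0 : s ≠ 0 := by rintro rfl; exact hd0 (by rw [hs, mul_zero])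
    exact case1_exists hq2 hs.symm hs0
  · have hj : jacobiSym D q = -1 := by
      rw [← jacobiSym.legendreSym.to_jacobiSym]
      exact (legendreSym.eq_neg_one_iff q).mpr hsq
    have hexp : ((q : ℤ) - jacobiSym D q).toNat = q + 1 := by rw [hj]; omega
    rw [hexp]
    exact case2_exists hq2 hd0 hsq

end KeyLemmas

/-- Theorem 7.5 (analogue of Korselt's criterion): an odd squarefree composite
`N` coprime to `D` is a `𝒢(D)`-Carmichael number iff `𝓕_D(q) ∣ 𝓕_D(N)` for every
prime `q ∣ N`, where `𝓕_D(n) = n − (D/n)` with `(D/n)` the Jacobi symbol. -/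
theorem stmt_9 (D : ℤ) (hD : Squarefree D)
    (N : ℕ) (hN1 : 1 < N) (hNodd : Odd N) (hNsf : Squarefree N)
    (hNcomp : ¬ N.Prime) (hND : Int.gcd (N : ℤ) D = 1) :
    (∀ z : Zsqrtd D, (N : ℤ) ∣ (z.norm - 1) →
        (N : Zsqrtd D) ∣ (z ^ ((N : ℤ) - jacobiSym D N).toNat - 1)) ↔
      (∀ q : ℕ, q.Prime → q ∣ N →
        ((q : ℤ) - jacobiSym D q) ∣ ((N : ℤ) - jacobiSym D N)) := by
  have hNbounds := jacobi_bounds D N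
  have hN_nonneg : 0 ≤ (N : ℤ) - jacobiSym D N := by
    have : (1 : ℤ) < (N : ℤ) := by exact_mod_cast hN1
    omega
  -- auxiliary facts about prime divisors
  have hq_facts : ∀ q : ℕ, q.Prime → q ∣ N → q ≠ 2 ∧ ¬ (q : ℤ) ∣ D := by
    intro q hq hqN
    constructor
    · rintro rfl
      rw [Nat.odd_iff] at hNodd
      obtain ⟨c, rfl⟩ := hqN
      omega
    · intro h
      have h1 : q ∣ (N : ℤ).natAbs.gcd D.natAbs :=
        Nat.dvd_gcd (by simpa using hqN) ((int_dvd_iff_natAbs q D).mp h)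
      rw [show (N : ℤ).natAbs.gcd D.natAbs = Int.gcd (N : ℤ) D from rfl, hND] at h1
      exact hq.one_lt.ne' (Nat.dvd_one.mp h1)
  constructor
  · -- Carmichael → Korselt
    intro hCar q hq hqN
    obtain ⟨hq2, hqD⟩ := hq_facts q hq hqN
    have hqbounds := jacobi_bounds D q
    have hq3 : 2 ≤ q := hq.two_le
    have hq_nonneg : 0 ≤ (q : ℤ) - jacobiSym D q := by
      have : (2 : ℤ) ≤ (q : ℤ) := by exact_mod_cast hq3
      omega
    obtain ⟨z0, hz0n, hz0k⟩ := keyB D q hq hq2 hqD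
    set M := N / q with hM
    have hNM : N = q * M := (Nat.mul_div_cancel' hqN).symm
    have hcop : Nat.Coprime q M := by
      have h := hNsf
      rw [hNM] at h
      exact (Nat.squarefree_mul_iff.mp h).1
    obtain ⟨xa, hxa1, hxa2⟩ := int_crt q M hcop z0.re 1
    obtain ⟨xb, hxb1, hxb2⟩ := int_crt q M hcop z0.im 0
    set z : Zsqrtd D := ⟨xa, xb⟩ with hzdef
    have hq_sub : (q : Zsqrtd D) ∣ z - z0 := by
      rw [natCast_dvd_zsqrtd]
      exact ⟨hxa1, hxb1⟩
    have hnq : (q : ℤ) ∣ z.norm - 1 := by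
      obtain ⟨c1, hc1⟩ := hxa1
      obtain ⟨c2, hc2⟩ := hxb1
      have hd1 : (q : ℤ) ∣ z.norm - z0.norm := by
        refine ⟨c1 * (xa + z0.re) - D * (c2 * (xb + z0.im)), ?_⟩
        rw [Zsqrtd.norm_def, Zsqrtd.norm_def]
        show xa * xa - D * xb * xb - (z0.re * z0.re - D * z0.im * z0.im) = _
        linear_combination (xa + z0.re) * hc1 - (D * (xb + z0.im)) * hc2
      have := dvd_add hd1 hz0n
      rwa [sub_add_sub_cancel] at this
    have hnM : (M : ℤ) ∣ z.norm - 1 := by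
      obtain ⟨c3, hc3⟩ := hxa2
      obtain ⟨c4, hc4⟩ := hxb2
      refine ⟨c3 * (xa + 1) - D * (c4 * xb), ?_⟩
      rw [Zsqrtd.norm_def]
      show xa * xa - D * xb * xb - 1 = _
      linear_combination (xa + 1) * hc3 - (D * xb) * hc4
    have hnN : (N : ℤ) ∣ z.norm - 1 := by
      rw [hNM]
      push_cast
      exact (Nat.isCoprime_iff_coprime.mpr hcop).mul_dvd hnq hnM
    have hzF := hCar z hnN
    have hqNz : (q : Zsqrtd D) ∣ (N : Zsqrtd D) := Nat.cast_dvd_cast hqN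
    have h1 : (q : Zsqrtd D) ∣ z ^ ((N : ℤ) - jacobiSym D N).toNat - 1 := dvd_trans hqNz hzF
    have h2 : (q : Zsqrtd D) ∣ z ^ ((N : ℤ) - jacobiSym D N).toNat -
        z0 ^ ((N : ℤ) - jacobiSym D N).toNat :=
      dvd_trans hq_sub (sub_dvd_pow_sub_pow z z0 _)
    have h3 : (q : Zsqrtd D) ∣ z0 ^ ((N : ℤ) - jacobiSym D N).toNat - 1 := by
      have := dvd_sub h1 h2
      convert this using 1
      ring
    have h4 := hz0k _ h3
    rw [← Int.toNat_of_nonneg hq_nonneg, ← Int.toNat_of_nonneg hN_nonneg]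
    exact_mod_cast h4
  · -- Korselt → Carmichael
    intro hdvd z hz
    have key : ∀ p : ℕ, p.Prime → p ∣ N →
        (p : Zsqrtd D) ∣ z ^ ((N : ℤ) - jacobiSym D N).toNat - 1 := by
      intro p hp hpN
      obtain ⟨hp2, hpD⟩ := hq_facts p hp hpN
      have hpbounds := jacobi_bounds D p
      have hp_nonneg : 0 ≤ (p : ℤ) - jacobiSym D p := by
        have : (2 : ℤ) ≤ (p : ℤ) := by exact_mod_cast hp.two_le
        omega
      have hzp : (p : ℤ) ∣ z.norm - 1 :=
        dvd_trans (Int.natCast_dvd_natCast.mpr hpN) hz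
      have hA := keyA D p hp hp2 hpD z hzp
      have hdvd' : ((p : ℤ) - jacobiSym D p).toNat ∣ ((N : ℤ) - jacobiSym D N).toNat := by
        rw [← Int.natCast_dvd_natCast, Int.toNat_of_nonneg hp_nonneg,
          Int.toNat_of_nonneg hN_nonneg]
        exact hdvd p hp hpN
      exact dvd_trans hA (pow_sub_one_dvd_pow_sub_one z hdvd')
    rw [natCast_dvd_zsqrtd]
    refine ⟨squarefree_nat_dvd_int hNsf _ (fun p hp hpN => ?_),
      squarefree_nat_dvd_int hNsf _ (fun p hp hpN => ?_)⟩
    · exact ((natCast_dvd_zsqrtd p _).mp (key p hp hpN)).1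
    · exact ((natCast_dvd_zsqrtd p _).mp (key p hp hpN)).2
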